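/- Let (X_n)_{n≥1} be a sequence of real random variables on a probability space (𝕏, ℬ, P) that is uniformly bounded in L² (i.e. sup_n E[X_n²] < ∞), and let (ℑ_n)_{n≥0} be an increasing sequence of σ-subalgebras of ℬ such that X_n is ℑ_n-measurable for every n. Then (1/n) Σ_{k=1}^n ( X_k − E(X_k | ℑ_{k−1}) ) → 0 as n → ∞, P-almost surely. -/

import Mathlib

open MeasureTheory Filter Topology
open scoped ENNReal

/-- Kronecker's lemma, in the form we need. -/
lemma lln_kronecker (a : ℕ → ℝ) (s : ℝ)
    (h : Tendsto (fun n : ℕ => ∑ k ∈ Finset.Icc 1 n, ((k : ℝ)⁻¹ * a k)) atTop (𝓝 s)) :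
    Tendsto (fun n : ℕ => (1 / (n : ℝ)) * ∑ k ∈ Finset.Icc 1 n, a k) atTop (𝓝 0) := by
  set S : ℕ → ℝ := fun n => ∑ k ∈ Finset.Icc 1 n, ((k : ℝ)⁻¹ * a k) with hS
  have key : ∀ n : ℕ, ∑ k ∈ Finset.Icc 1 n, a k
      = (n : ℝ) * S n - ∑ j ∈ Finset.range n, S j := by
    intro n
    induction n with
    | zero => simp [hS]
    | succ n ih =>
      have h1 : (1 : ℕ) ≤ n + 1 := by omega
      have hne : ((n : ℝ) + 1) ≠ 0 := by positivity
      rw [Finset.sum_Icc_succ_top h1, ih, Finset.sum_range_succ]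
      have hSn : S (n + 1) = S n + ((n : ℝ) + 1)⁻¹ * a (n + 1) := by
        simp only [hS]
        rw [Finset.sum_Icc_succ_top h1]
        push_cast
        ring
      rw [hSn]
      push_cast
      field_simp
      ring
  have hcesaro : Tendsto (fun n : ℕ => (n : ℝ)⁻¹ • ∑ j ∈ Finset.range n, S j) atTop (𝓝 s) :=
    h.cesaro
  have hlim : Tendsto (fun n : ℕ => S n - (n : ℝ)⁻¹ • ∑ j ∈ Finset.range n, S j)
      atTop (𝓝 0) := by
    have := h.sub hcesaro
    simpa using this
  refine hlim.congr' ?_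
  filter_upwards [eventually_ge_atTop 1] with n hn
  have hne : (n : ℝ) ≠ 0 := by positivity
  rw [key n, smul_eq_mul]
  field_simp

/-- ∑_{k=1}^n 1/k² ≤ 2. -/
lemma lln_sum_inv_sq_le (n : ℕ) : ∑ k ∈ Finset.Icc 1 n, ((k : ℝ)⁻¹) ^ 2 ≤ 2 := by
  rcases Nat.eq_zero_or_pos n with rfl | hn
  · simp
  have h1 : Finset.Icc 1 n = insert 1 (Finset.Ioc 1 n) := by
    rw [← Finset.Icc_erase_left, Finset.insert_erase (Finset.mem_Icc.mpr ⟨le_refl 1, hn⟩)]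
  rw [h1, Finset.sum_insert (by simp)]
  have h2 : ∑ k ∈ Finset.Ioc 1 n, ((k : ℝ)⁻¹) ^ 2 ≤ (1 : ℝ)⁻¹ - (n : ℝ)⁻¹ := by
    have := sum_Ioc_inv_sq_le_sub (α := ℝ) (k := 1) (n := n) one_ne_zero hn
    simpa [inv_pow] using this
  have h3 : (0 : ℝ) ≤ (n : ℝ)⁻¹ := by positivity
  simp only [Nat.cast_one, inv_one, one_pow]
  nlinarith

/-- The conditional expectation of an L² function is in L², with smaller norm. -/
lemma lln_memℒp_two_condexp {α : Type*} {m m0 : MeasurableSpace α} (hm : m ≤ m0)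
    {μ : Measure α} [IsFiniteMeasure μ] {f : α → ℝ} (hf : MemLp f 2 μ) :
    MemLp (μ[f|m]) 2 μ ∧ eLpNorm (μ[f|m]) 2 μ ≤ eLpNorm f 2 μ := by
  set F : Lp ℝ 2 μ := hf.toLp f with hF
  have hFf : (F : α → ℝ) =ᵐ[μ] f := hf.coeFn_toLp
  set G : α → ℝ := ⇑((condExpL2 ℝ ℝ hm F : lpMeas ℝ ℝ m 2 μ) : Lp ℝ 2 μ) with hG
  have hGmem : MemLp G 2 μ := Lp.memLp _
  have hGle : eLpNorm G 2 μ ≤ eLpNorm f 2 μ := by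
    refine (eLpNorm_condExpL2_le hm F).trans ?_
    rw [eLpNorm_congr_ae hFf]
  have hGeq : G =ᵐ[μ] μ[f|m] := by
    refine ae_eq_condExp_of_forall_setIntegral_eq hm (hf.integrable one_le_two)
      (fun s _ _ => (hGmem.integrable one_le_two).integrableOn)
      (fun s hs hμs => ?_) ?_
    · rw [integral_condExpL2_eq hm F hs hμs.ne]
      exact setIntegral_congr_ae (hm s hs) (hFf.mono fun x hx _ => hx)
    · exact aestronglyMeasurable_condExpL2 hm F
  exact ⟨hGmem.ae_eq hGeq, by rwa [← eLpNorm_congr_ae hGeq]⟩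

/-- **Law of Large Numbers.** Let `(X_n)_{n ≥ 1}` be a sequence of real random variables
on a probability space `(𝕏, ℬ, P)`, uniformly bounded in `L²`, and let `(ℑ_n)_{n ≥ 0}` be
an increasing sequence of sub-σ-algebras of `ℬ` such that `X_n` is `ℑ_n`-measurable for
every `n ≥ 1`. Then `(1/n) Σ_{k=1}^n (X_k - E(X_k | ℑ_{k-1})) → 0` `P`-almost surely. -/
theorem lln_martingale_differences
    {Ω : Type*} [mΩ : MeasurableSpace Ω] (P : Measure Ω) [IsProbabilityMeasure P]
    (ℑ : ℕ → MeasurableSpace Ω) (hmono : Monotone ℑ) (hle : ∀ n, ℑ n ≤ mΩ)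
    (X : ℕ → Ω → ℝ) (hadapt : ∀ n, 1 ≤ n → Measurable[ℑ n] (X n))
    (hbdd : ∃ C : ℝ≥0∞, C < ⊤ ∧ ∀ n, 1 ≤ n → eLpNorm (X n) 2 P ≤ C) :
    ∀ᵐ ω ∂P, Tendsto
      (fun n : ℕ => (1 / (n : ℝ)) * ∑ k ∈ Finset.Icc 1 n, (X k ω - (P[X k | ℑ (k - 1)]) ω))
      atTop (𝓝 0) := by
  classical
  obtain ⟨C, hC_lt, hC⟩ := hbdd
  set Ct : ℝ := C.toReal with hCtdef
  have hCt0 : 0 ≤ Ct := ENNReal.toReal_nonneg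
  set ℱ : Filtration ℕ mΩ := ⟨ℑ, hmono, hle⟩ with hℱdef
  set Y : ℕ → Ω → ℝ := fun k => X k - P[X k | ℑ (k - 1)] with hYdef
  -- basic Memℒp facts
  have hXmem : ∀ k, 1 ≤ k → MemLp (X k) 2 P := fun k hk =>
    ⟨(((hadapt k hk).mono (hle k) le_rfl)).aestronglyMeasurable,
      lt_of_le_of_lt (hC k hk) hC_lt⟩
  have hEmem : ∀ k, 1 ≤ k → MemLp (P[X k | ℑ (k - 1)]) 2 P := fun k hk =>
    (lln_memℒp_two_condexp (hle (k - 1)) (hXmem k hk)).1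
  have hYmem : ∀ k, 1 ≤ k → MemLp (Y k) 2 P := fun k hk =>
    (hXmem k hk).sub (hEmem k hk)
  have hYnorm : ∀ k, 1 ≤ k → eLpNorm (Y k) 2 P ≤ 2 * C := by
    intro k hk
    refine (eLpNorm_sub_le (hXmem k hk).1 (hEmem k hk).1 one_le_two).trans ?_
    have h2 := (lln_memℒp_two_condexp (hle (k - 1)) (hXmem k hk)).2
    calc eLpNorm (X k) 2 P + eLpNorm (P[X k | ℑ (k - 1)]) 2 P
        ≤ C + C := add_le_add (hC k hk) (h2.trans (hC k hk))
      _ = 2 * C := (two_mul C).symm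
  -- integral of square of Y bounded
  have hYsq : ∀ k, 1 ≤ k → ∫ ω, (Y k ω) ^ 2 ∂P ≤ (2 * Ct) ^ 2 := by
    intro k hk
    set J : ℝ := ∫ ω, ‖Y k ω‖ ^ (2 : ℝ) ∂P with hJdef
    have hJeq : ∫ ω, (Y k ω) ^ 2 ∂P = J := by
      rw [hJdef]
      refine integral_congr_ae (Eventually.of_forall fun ω => ?_)
      simp only [Real.rpow_two, Real.norm_eq_abs, sq_abs]
    have hJ0 : 0 ≤ J := by
      rw [hJdef]
      exact integral_nonneg fun ω => by positivity
    have heq := (hYmem k hk).eLpNorm_eq_integral_rpow_norm two_ne_zero ENNReal.ofNat_ne_top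
    have htoReal : (2 : ℝ≥0∞).toReal = (2 : ℝ) := by simp
    rw [htoReal] at heq
    have hle2C : ENNReal.ofReal (J ^ (2 : ℝ)⁻¹) ≤ 2 * C := by
      rw [← heq]; exact hYnorm k hk
    have h2C_ne : (2 * C) ≠ ∞ := by
      exact ENNReal.mul_ne_top (by norm_num) hC_lt.ne
    have h12 : J ^ (2 : ℝ)⁻¹ ≤ 2 * Ct := by
      have := ENNReal.toReal_mono h2C_ne hle2C
      rwa [ENNReal.toReal_ofReal (by positivity), ENNReal.toReal_mul,
        ENNReal.toReal_ofNat] at this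
    have hJval : J = (J ^ (2 : ℝ)⁻¹) ^ 2 := by
      rw [← Real.rpow_natCast (J ^ (2 : ℝ)⁻¹) 2, ← Real.rpow_mul hJ0]
      norm_num
    rw [hJeq, hJval]
    have h0 : 0 ≤ J ^ (2 : ℝ)⁻¹ := Real.rpow_nonneg hJ0 _
    exact pow_le_pow_left₀ h0 h12 2
  -- the martingale
  set M : ℕ → Ω → ℝ := fun n => ∑ k ∈ Finset.Icc 1 n, (k : ℝ)⁻¹ • Y k with hMdef
  have hMmem : ∀ n, MemLp (M n) 2 P := by
    intro n
    refine memLp_finsetSum' _ fun k hk => ?_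
    exact ((hYmem k (Finset.mem_Icc.mp hk).1).const_smul ((k : ℝ)⁻¹))
  have hMint : ∀ n, Integrable (M n) P := fun n => (hMmem n).integrable one_le_two
  have hYint : ∀ k, 1 ≤ k → Integrable (Y k) P := fun k hk =>
    (hYmem k hk).integrable one_le_two
  have hadp : ∀ n, StronglyMeasurable[ℑ n] (M n) := by
    intro n
    rw [hMdef]
    refine Finset.sum_induction _ (fun f => StronglyMeasurable[ℑ n] f)
      (fun f g hf hg => hf.add hg) stronglyMeasurable_zero ?_
    intro k hk
    obtain ⟨hk1, hk2⟩ := Finset.mem_Icc.mp hk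
    have hX : StronglyMeasurable[ℑ n] (X k) :=
      ((hadapt k hk1).mono (hmono hk2) le_rfl).stronglyMeasurable
    have hE : StronglyMeasurable[ℑ n] (P[X k | ℑ (k - 1)]) :=
      stronglyMeasurable_condExp.mono (hmono ((Nat.sub_le k 1).trans hk2))
    exact (hX.sub hE).const_smul _
  -- conditional expectation of increments vanishes
  have hYcond : ∀ n : ℕ, P[Y (n + 1) | ℑ n] =ᵐ[P] 0 := by
    intro n
    have hXint : Integrable (X (n + 1)) P := (hXmem (n + 1) (by omega)).integrable one_le_two
    have h1 : P[Y (n + 1) | ℑ n]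
        =ᵐ[P] P[X (n + 1) | ℑ n] - P[P[X (n + 1) | ℑ n] | ℑ n] := by
      have hy : Y (n + 1) = X (n + 1) - P[X (n + 1) | ℑ n] := rfl
      rw [hy]
      exact condExp_sub hXint (integrable_condExp (m := ℑ n)) _
    have h2 : P[P[X (n + 1) | ℑ n] | ℑ n] = P[X (n + 1) | ℑ n] :=
      condExp_of_stronglyMeasurable (hle n) stronglyMeasurable_condExp integrable_condExp
    rw [h2] at h1
    filter_upwards [h1] with ω hω
    simp only [Pi.sub_apply] at hω
    simp [hω]
  have hMsucc : ∀ n : ℕ, M (n + 1) = M n + ((n + 1 : ℕ) : ℝ)⁻¹ • Y (n + 1) := by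
    intro n
    rw [hMdef]
    exact Finset.sum_Icc_succ_top (by omega) _
  have hmart : Martingale M ℱ P := by
    refine martingale_nat hadp hMint fun i => ?_
    have hint2 : Integrable (((i + 1 : ℕ) : ℝ)⁻¹ • Y (i + 1)) P :=
      (hYint (i + 1) (by omega)).smul _
    have h1 : P[M (i + 1) | ℑ i]
        =ᵐ[P] P[M i | ℑ i] + P[((i + 1 : ℕ) : ℝ)⁻¹ • Y (i + 1) | ℑ i] := by
      rw [hMsucc i]
      exact condExp_add (hMint i) hint2 _
    have h2 : P[M i | ℑ i] = M i :=
      condExp_of_stronglyMeasurable (hle i) (hadp i) (hMint i)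
    have h3 : P[((i + 1 : ℕ) : ℝ)⁻¹ • Y (i + 1) | ℑ i]
        =ᵐ[P] ((i + 1 : ℕ) : ℝ)⁻¹ • P[Y (i + 1) | ℑ i] :=
      condExp_smul _ _ _
    refine EventuallyEq.symm ?_
    refine h1.trans ?_
    rw [h2]
    filter_upwards [h3, hYcond i] with ω hω h0
    simp only [Pi.add_apply, Pi.smul_apply, smul_eq_mul] at *
    rw [hω, h0]
    simp
  -- L² bound for M by orthogonality of increments
  have hMsq : ∀ n, ∫ ω, (M n ω) ^ 2 ∂P
      ≤ (2 * Ct) ^ 2 * ∑ k ∈ Finset.Icc 1 n, ((k : ℝ)⁻¹) ^ 2 := by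
    intro n
    induction n with
    | zero => simp [hMdef]
    | succ n ih =>
      set c : ℝ := ((n + 1 : ℕ) : ℝ)⁻¹ with hcdef
      have hYm : MemLp (Y (n + 1)) 2 P := hYmem (n + 1) (by omega)
      have hMn2 : Integrable (fun ω => (M n ω) ^ 2) P := (hMmem n).integrable_sq
      have hY2 : Integrable (fun ω => (Y (n + 1) ω) ^ 2) P := hYm.integrable_sq
      have hMYmem : MemLp (M n * Y (n + 1)) 1 P := by
        have := hYm.smul (hMmem n) (p := 2) (q := 2) (r := 1)
        have hsm : (M n) • (Y (n + 1)) = M n * Y (n + 1) := rfl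
        rwa [hsm] at this
      have hMY : Integrable (M n * Y (n + 1)) P := hMYmem.integrable le_rfl
      have hcross : ∫ ω, M n ω * Y (n + 1) ω ∂P = 0 := by
        have hpull : P[M n * Y (n + 1) | ℑ n] =ᵐ[P] M n * P[Y (n + 1) | ℑ n] :=
          condExp_mul_of_stronglyMeasurable_left (hadp n) hMY (hYint (n + 1) (by omega))
        have h0 : P[M n * Y (n + 1) | ℑ n] =ᵐ[P] 0 := by
          filter_upwards [hpull, hYcond n] with ω h1 h2
          simp only [Pi.mul_apply] at h1
          simp only [Pi.zero_apply] at h2 ⊢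
          rw [h1, h2, mul_zero]
        have hint_eq : ∫ ω, (P[M n * Y (n + 1) | ℑ n]) ω ∂P
            = ∫ ω, (M n * Y (n + 1)) ω ∂P := integral_condExp (hle n)
        have : ∫ ω, (M n * Y (n + 1)) ω ∂P = 0 := by
          rw [← hint_eq, integral_congr_ae h0]
          simp
        simpa using this
      have hexp : ∫ ω, (M (n + 1) ω) ^ 2 ∂P
          = ∫ ω, (M n ω) ^ 2 ∂P + ((2 * c) * ∫ ω, M n ω * Y (n + 1) ω ∂P
            + c ^ 2 * ∫ ω, (Y (n + 1) ω) ^ 2 ∂P) := by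
        have hMY' : Integrable (fun ω => M n ω * Y (n + 1) ω) P := hMY
        have hint2 : Integrable
            (fun ω => 2 * c * (M n ω * Y (n + 1) ω) + c ^ 2 * (Y (n + 1) ω) ^ 2) P :=
          (hMY'.const_mul (2 * c)).add (hY2.const_mul (c ^ 2))
        calc ∫ ω, (M (n + 1) ω) ^ 2 ∂P
            = ∫ ω, ((M n ω) ^ 2
              + (2 * c * (M n ω * Y (n + 1) ω) + c ^ 2 * (Y (n + 1) ω) ^ 2)) ∂P := by
              refine integral_congr_ae (Eventually.of_forall fun ω => ?_)
              rw [hMsucc n]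
              simp only [Pi.add_apply, Pi.smul_apply, smul_eq_mul, ← hcdef]
              ring
          _ = ∫ ω, (M n ω) ^ 2 ∂P
              + ∫ ω, (2 * c * (M n ω * Y (n + 1) ω) + c ^ 2 * (Y (n + 1) ω) ^ 2) ∂P :=
              integral_add hMn2 hint2
          _ = ∫ ω, (M n ω) ^ 2 ∂P + ((2 * c) * ∫ ω, M n ω * Y (n + 1) ω ∂P
              + c ^ 2 * ∫ ω, (Y (n + 1) ω) ^ 2 ∂P) := by
              rw [integral_add (hMY'.const_mul (2 * c)) (hY2.const_mul (c ^ 2)),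
                integral_const_mul, integral_const_mul]
      have hcsq : 0 ≤ c ^ 2 := sq_nonneg c
      have hstep : ∫ ω, (M (n + 1) ω) ^ 2 ∂P
          ≤ ∫ ω, (M n ω) ^ 2 ∂P + c ^ 2 * (2 * Ct) ^ 2 := by
        rw [hexp, hcross]
        have := mul_le_mul_of_nonneg_left (hYsq (n + 1) (by omega)) hcsq
        linarith
      rw [Finset.sum_Icc_succ_top (by omega : 1 ≤ n + 1)]
      have hc' : ((n + 1 : ℕ) : ℝ)⁻¹ ^ 2 = c ^ 2 := by rw [hcdef]
      rw [mul_add, hc']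
      linarith
  -- uniform L¹ bound
  set R : NNReal := (((2 * Ct) ^ 2 * 2) ^ (2 : ℝ)⁻¹).toNNReal with hRdef
  have hbddM : ∀ n, eLpNorm (M n) 1 P ≤ (R : ℝ≥0∞) := by
    intro n
    refine (eLpNorm_le_eLpNorm_of_exponent_le (p := 1) (q := 2) (μ := P) (by norm_num) (hMmem n).1).trans ?_
    have heq := (hMmem n).eLpNorm_eq_integral_rpow_norm two_ne_zero ENNReal.ofNat_ne_top
    have htoReal : (2 : ℝ≥0∞).toReal = (2 : ℝ) := by simp
    rw [htoReal] at heq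
    rw [heq]
    have hJle : ∫ ω, ‖M n ω‖ ^ (2 : ℝ) ∂P ≤ (2 * Ct) ^ 2 * 2 := by
      have h1 : ∫ ω, ‖M n ω‖ ^ (2 : ℝ) ∂P = ∫ ω, (M n ω) ^ 2 ∂P := by
        refine integral_congr_ae (Eventually.of_forall fun ω => ?_)
        simp only [Real.rpow_two, Real.norm_eq_abs, sq_abs]
      rw [h1]
      refine (hMsq n).trans ?_
      have := lln_sum_inv_sq_le n
      nlinarith [sq_nonneg (2 * Ct)]
    have hJ0 : 0 ≤ ∫ ω, ‖M n ω‖ ^ (2 : ℝ) ∂P := integral_nonneg fun ω => by positivity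
    have hRcoe : (R : ℝ≥0∞) = ENNReal.ofReal (((2 * Ct) ^ 2 * 2) ^ (2 : ℝ)⁻¹) := rfl
    rw [hRcoe]
    exact ENNReal.ofReal_le_ofReal (Real.rpow_le_rpow hJ0 hJle (by norm_num))
  -- almost sure convergence of the martingale
  have hconv := hmart.submartingale.ae_tendsto_limitProcess hbddM
  filter_upwards [hconv] with ω hω
  have hMeval : ∀ n, M n ω = ∑ k ∈ Finset.Icc 1 n, (k : ℝ)⁻¹ * Y k ω := by
    intro n
    rw [hMdef]
    simp [Finset.sum_apply]
  have hkron := lln_kronecker (fun k => Y k ω) (ℱ.limitProcess M P ω) ?_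
  · exact hkron
  · refine hω.congr fun n => ?_
    rw [hMeval n]
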